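/- Combinatorial core of the converse (Theorem 2): let r ≥ 1 and M ≥ 1 be integers and let d : V(r) → ℕ be any assignment of degrees of freedom satisfying d_v ≤ M for every v ∈ V(r) and d_u + d_v ≤ M for every edge {u,v} ∈ E(r). Then 2·Σ_{v ∈ V(r)} d_v ≤ ⌊3M/2⌋·|T(r)| + 2M·|V_ex(r)|. -/

import Mathlib

/-- Vertex set of the cellular interference graph: pairs `(a,b)` identified with
the Eisenstein integer `a + bω`, where `ω = (−1+i√3)/2`, satisfying
`|Re(a+bω)| ≤ r` and `|Im(a+bω)| ≤ (√3/2)r`, i.e. `|2a − b| ≤ 2r` and `|b| ≤ r`. -/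
noncomputable def V (r : ℤ) : Finset (ℤ × ℤ) :=
  (Finset.Icc (-(2 * r)) (2 * r) ×ˢ Finset.Icc (-r) r).filter
    (fun p => |2 * p.1 - p.2| ≤ 2 * r ∧ |p.2| ≤ r)

/-- `f(a,b) = (a+b) mod 3`. -/
def f (p : ℤ × ℤ) : ℤ := (p.1 + p.2) % 3

/-- Triangle index set: `(a,b)` with `f(a,b) ≠ 0` such that all three points
`(a,b)`, `(a,b+1)`, `(a+1,b+1)` lie in `V r`. -/
noncomputable def T (r : ℤ) : Finset (ℤ × ℤ) :=
  (V r).filter (fun p => f p ≠ 0 ∧ (p.1, p.2 + 1) ∈ V r ∧ (p.1 + 1, p.2 + 1) ∈ V r)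

/-- The vertex set of the triangle indexed by `p = (a,b)`:
`{(a,b), (a,b+1), (a+1,b+1)}`. -/
def triVerts (p : ℤ × ℤ) : Finset (ℤ × ℤ) := {p, (p.1, p.2 + 1), (p.1 + 1, p.2 + 1)}

/-- The number `n_v` of triangles of `T r` whose vertex set contains `v`. -/
noncomputable def nTri (r : ℤ) (v : ℤ × ℤ) : ℕ := ((T r).filter (fun p => v ∈ triVerts p)).card

/-- The boundary vertices: those belonging to fewer than two triangles. -/
noncomputable def Vex (r : ℤ) : Finset (ℤ × ℤ) := (V r).filter (fun v => nTri r v < 2)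

/-- Adjacency (edge) relation of the cellular interference graph: `{u,v}` is an
edge iff `u, v ∈ V r` and there is `(a,b) ∈ ℤ²` with `(a+b) mod 3 ≠ 0` such that
`{u,v}` is one of `{(a,b),(a,b+1)}`, `{(a,b),(a+1,b+1)}`, `{(a,b+1),(a+1,b+1)}`. -/
def Adj (r : ℤ) (u v : ℤ × ℤ) : Prop :=
  u ∈ V r ∧ v ∈ V r ∧ ∃ a b : ℤ, (a + b) % 3 ≠ 0 ∧
    ( ({u, v} : Set (ℤ × ℤ)) = {(a, b), (a, b + 1)} ∨
      ({u, v} : Set (ℤ × ℤ)) = {(a, b), (a + 1, b + 1)} ∨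
      ({u, v} : Set (ℤ × ℤ)) = {(a, b + 1), (a + 1, b + 1)} )


lemma mem_triVerts {v p : ℤ × ℤ} :
    v ∈ triVerts p ↔ v = p ∨ v = (p.1, p.2 + 1) ∨ v = (p.1 + 1, p.2 + 1) := by
  simp [triVerts]

lemma triVerts_subset_of_mem_T {r : ℤ} {p : ℤ × ℤ} (hp : p ∈ T r) :
    triVerts p ⊆ V r := by
  simp only [T, Finset.mem_filter] at hp
  intro v hv
  rcases mem_triVerts.mp hv with h | h | h <;> subst h
  · exact hp.1
  · exact hp.2.2.1
  · exact hp.2.2.2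

lemma tri_sum_le {r : ℤ} {M : ℕ} {d : ℤ × ℤ → ℕ}
    (hedge : ∀ u v : ℤ × ℤ, Adj r u v → d u + d v ≤ M)
    {p : ℤ × ℤ} (hp : p ∈ T r) :
    ∑ v ∈ triVerts p, d v ≤ 3 * M / 2 := by
  simp only [T, Finset.mem_filter] at hp
  have hpV := hp.1
  have hf := hp.2.1
  have hqV := hp.2.2.1
  have hsV := hp.2.2.2
  have hf' : (p.1 + p.2) % 3 ≠ 0 := hf
  have e1 : d p + d (p.1, p.2 + 1) ≤ M := by
    refine hedge _ _ ⟨hpV, hqV, p.1, p.2, hf', Or.inl rfl⟩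
  have e2 : d p + d (p.1 + 1, p.2 + 1) ≤ M := by
    refine hedge _ _ ⟨hpV, hsV, p.1, p.2, hf', Or.inr (Or.inl rfl)⟩
  have e3 : d (p.1, p.2 + 1) + d (p.1 + 1, p.2 + 1) ≤ M := by
    refine hedge _ _ ⟨hqV, hsV, p.1, p.2, hf', Or.inr (Or.inr rfl)⟩
  have hsum : ∑ v ∈ triVerts p, d v = d p + d (p.1, p.2 + 1) + d (p.1 + 1, p.2 + 1) := by
    have h1 : p ≠ (p.1, p.2 + 1) := by
      intro h; have := congrArg Prod.snd h; simp at this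
    have h2 : p ≠ (p.1 + 1, p.2 + 1) := by
      intro h; have := congrArg Prod.fst h; simp at this
    have h3 : (p.1, p.2 + 1) ≠ (p.1 + 1, p.2 + 1) := by
      intro h; have := congrArg Prod.fst h; simp at this
    simp [triVerts, Finset.sum_insert, h1, h2, h3, add_assoc]
  omega

lemma nTri_le_two (r : ℤ) (v : ℤ × ℤ) : nTri r v ≤ 2 := by
  have hsub : ∀ p ∈ (T r).filter (fun p => v ∈ triVerts p),
      f p ≠ 0 ∧ (p = v ∨ p = (v.1, v.2 - 1) ∨ p = (v.1 - 1, v.2 - 1)) := by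
    intro p hp
    simp only [Finset.mem_filter, T] at hp
    refine ⟨hp.1.2.1, ?_⟩
    rcases mem_triVerts.mp hp.2 with h | h | h
    · exact Or.inl h.symm
    · refine Or.inr (Or.inl ?_)
      have h1 := congrArg Prod.fst h; have h2 := congrArg Prod.snd h
      simp at h1 h2
      exact Prod.ext (by omega) (by omega)
    · refine Or.inr (Or.inr ?_)
      have h1 := congrArg Prod.fst h; have h2 := congrArg Prod.snd h
      simp at h1 h2
      exact Prod.ext (by omega) (by omega)
  have hm : (v.1 + v.2) % 3 = 0 ∨ (v.1 + v.2) % 3 = 1 ∨ (v.1 + v.2) % 3 = 2 := by omega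
  have pair_card : ∀ a b : ℤ × ℤ, ({a, b} : Finset (ℤ × ℤ)).card ≤ 2 := by
    intro a b
    exact (Finset.card_insert_le _ _).trans (by simp)
  rcases hm with hm | hm | hm
  · refine le_trans (Finset.card_le_card (fun p hp => ?_)) (pair_card (v.1, v.2 - 1) (v.1 - 1, v.2 - 1))
    obtain ⟨hf, h | h | h⟩ := hsub p hp
    · exfalso; subst h; exact hf (by simp only [f]; omega)
    · simp [h]
    · simp [h]
  · refine le_trans (Finset.card_le_card (fun p hp => ?_)) (pair_card v (v.1 - 1, v.2 - 1))
    obtain ⟨hf, h | h | h⟩ := hsub p hp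
    · simp [h]
    · exfalso; subst h; exact hf (by simp only [f]; omega)
    · simp [h]
  · refine le_trans (Finset.card_le_card (fun p hp => ?_)) (pair_card v (v.1, v.2 - 1))
    obtain ⟨hf, h | h | h⟩ := hsub p hp
    · simp [h]
    · simp [h]
    · exfalso; subst h; exact hf (by simp only [f]; omega)

lemma double_count (r : ℤ) (d : ℤ × ℤ → ℕ) :
    ∑ p ∈ T r, ∑ v ∈ triVerts p, d v = ∑ v ∈ V r, nTri r v * d v := by
  have h1 : ∀ p ∈ T r,
      ∑ v ∈ triVerts p, d v = ∑ v ∈ V r, if v ∈ triVerts p then d v else 0 := by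
    intro p hp
    rw [← Finset.sum_filter, Finset.filter_mem_eq_inter,
      Finset.inter_eq_right.mpr (triVerts_subset_of_mem_T hp)]
  rw [Finset.sum_congr rfl h1, Finset.sum_comm]
  refine Finset.sum_congr rfl fun v hv => ?_
  rw [← Finset.sum_filter, Finset.sum_const, nTri, smul_eq_mul]

/-- **Combinatorial core of the converse (Theorem 2).** If `d : V(r) → ℕ`
satisfies `d_v ≤ M` for all `v ∈ V(r)` and `d_u + d_v ≤ M` on every edge, then
`2·Σ_{v ∈ V(r)} d_v ≤ ⌊3M/2⌋·|T(r)| + 2M·|V_ex(r)|` (natural division is floor). -/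
theorem converse_core (r : ℤ) (hr : 1 ≤ r) (M : ℕ) (hM : 1 ≤ M)
    (d : ℤ × ℤ → ℕ)
    (hd : ∀ v ∈ V r, d v ≤ M)
    (hedge : ∀ u v : ℤ × ℤ, Adj r u v → d u + d v ≤ M) :
    2 * ∑ v ∈ V r, d v ≤ (3 * M / 2) * (T r).card + 2 * M * (Vex r).card := by
  have key1 : ∑ v ∈ V r, nTri r v * d v ≤ (T r).card * (3 * M / 2) := by
    rw [← double_count]
    exact Finset.sum_le_card_nsmul _ _ _ (fun p hp => tri_sum_le hedge hp)
  have key2 : ∑ v ∈ V r, (2 - nTri r v) * d v ≤ (Vex r).card * (2 * M) := by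
    have heq : ∑ v ∈ V r, (2 - nTri r v) * d v = ∑ v ∈ Vex r, (2 - nTri r v) * d v := by
      refine (Finset.sum_subset (Finset.filter_subset _ _) fun v hv hnv => ?_).symm
      simp only [Vex, Finset.mem_filter, hv, true_and, not_lt] at hnv
      have : 2 - nTri r v = 0 := by omega
      simp [this]
    rw [heq]
    refine Finset.sum_le_card_nsmul _ _ _ fun v hv => ?_
    have hvV : v ∈ V r := (Finset.filter_subset _ _) hv
    have := hd v hvV
    have h2 : (2 - nTri r v) ≤ 2 := by omega
    calc (2 - nTri r v) * d v ≤ 2 * d v := Nat.mul_le_mul_right _ h2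
      _ ≤ 2 * M := by omega
  have hsplit : 2 * ∑ v ∈ V r, d v
      = ∑ v ∈ V r, nTri r v * d v + ∑ v ∈ V r, (2 - nTri r v) * d v := by
    rw [Finset.mul_sum, ← Finset.sum_add_distrib]
    refine Finset.sum_congr rfl fun v hv => ?_
    have := nTri_le_two r v
    cases Nat.lt_or_ge (nTri r v) 2 with
    | _ => nlinarith [Nat.sub_add_cancel (nTri_le_two r v)]
  rw [hsplit]
  calc ∑ v ∈ V r, nTri r v * d v + ∑ v ∈ V r, (2 - nTri r v) * d v
      ≤ (T r).card * (3 * M / 2) + (Vex r).card * (2 * M) := Nat.add_le_add key1 key2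
    _ = (3 * M / 2) * (T r).card + 2 * M * (Vex r).card := by ring
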